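/- min{w^{(1)}, w^{(2)}, …, w^{(L)}} = d, where d is the code distance of the polynomial remainder code with moduli m_1(x), …, m_L(x) and, for each i, w^{(i)} is the code distance of the polynomial remainder code with the L−1 moduli Γ_{ji}(x) = m_j(x)/gcd(m_i(x), m_j(x)), j ≠ i. -/

import Mathlib

open Polynomial
open scoped Classical

/-- The code distance of the polynomial remainder code with moduli `m i`, `i ∈ s`. -/
noncomputable def codeDist {F : Type*} [Field F] {ι : Type*} (s : Finset ι)
    (m : ι → Polynomial F) : ℕ :=
  sInf {k | ∃ a : Polynomial F, a ≠ 0 ∧ a.degree < (s.lcm m).degree ∧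
    (s.filter fun i => ¬ m i ∣ a).card = k}

section Aux

variable {F : Type*} [Field F]

lemma gcd_ne_zero' {a b : Polynomial F} (ha : a ≠ 0) : gcd a b ≠ 0 :=
  fun h => ha ((gcd_eq_zero_iff a b).mp h).1

lemma gcd_monic' {a b : Polynomial F} (ha : a ≠ 0) : (gcd a b).Monic := by
  rw [← normalize_gcd]
  exact monic_normalize (gcd_ne_zero' ha)

lemma mul_divByMonic' {d p : Polynomial F} (hd : d.Monic) (h : d ∣ p) :
    d * (p /ₘ d) = p := by
  conv_rhs => rw [← modByMonic_add_div p d]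
  rw [(modByMonic_eq_zero_iff_dvd hd).mpr h, zero_add]

lemma monic_divByMonic' {d p : Polynomial F} (hd : d.Monic) (hp : p.Monic) (h : d ∣ p) :
    (p /ₘ d).Monic :=
  hd.of_mul_monic_left (by rw [mul_divByMonic' hd h]; exact hp)

/-- `m_j ∣ k·m_i ↔ Γ_{ji} ∣ k`. -/
lemma dvd_mul_iff_div_gcd_dvd {mi mj k : Polynomial F} (hi : mi ≠ 0) :
    mj ∣ k * mi ↔ (mj /ₘ gcd mi mj) ∣ k := by
  have hd : (gcd mi mj).Monic := gcd_monic' hi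
  have hdj : gcd mi mj * (mj /ₘ gcd mi mj) = mj :=
    mul_divByMonic' hd (gcd_dvd_right mi mj)
  constructor
  · intro h
    have h2 : mj ∣ normalize k * gcd mi mj := by
      have := dvd_gcd h (dvd_mul_left mj k)
      rwa [gcd_mul_left] at this
    have h3 : (mj /ₘ gcd mi mj) * gcd mi mj ∣ normalize k * gcd mi mj := by
      rw [mul_comm (mj /ₘ gcd mi mj), hdj]
      exact h2
    have h4 := (mul_dvd_mul_iff_right hd.ne_zero).mp h3
    exact dvd_trans h4 (normalize_dvd_iff.mpr dvd_rfl)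
  · intro h
    calc mj = gcd mi mj * (mj /ₘ gcd mi mj) := hdj.symm
    _ ∣ mi * k := mul_dvd_mul (gcd_dvd_left mi mj) h
    _ = k * mi := mul_comm _ _

variable {L : ℕ} (m : Fin L → Polynomial F)

/-- `lcm(m_i, m_j) = m_i · Γ_{ji}`. -/
lemma lcm_pair_eq (hmonic : ∀ i, (m i).Monic) (i j : Fin L) :
    lcm (m i) (m j) = m i * (m j /ₘ gcd (m i) (m j)) := by
  have hi := (hmonic i).ne_zero
  have hd : (gcd (m i) (m j)).Monic := gcd_monic' hi
  have hdj : gcd (m i) (m j) * (m j /ₘ gcd (m i) (m j)) = m j :=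
    mul_divByMonic' hd (gcd_dvd_right _ _)
  have hlcm_ne : lcm (m i) (m j) ≠ 0 := by
    intro h
    rcases (lcm_eq_zero_iff _ _).mp h with h' | h'
    · exact hi h'
    · exact (hmonic j).ne_zero h'
  have hlcm_monic : (lcm (m i) (m j)).Monic := by
    rw [← normalize_lcm]
    exact monic_normalize hlcm_ne
  refine eq_of_monic_of_associated hlcm_monic ((hmonic i).mul (monic_divByMonic' hd (hmonic j) (gcd_dvd_right _ _))) ?_
  obtain ⟨u, hu⟩ := gcd_mul_lcm (m i) (m j)
  have key : gcd (m i) (m j) * (lcm (m i) (m j) * u) =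
      gcd (m i) (m j) * (m i * (m j /ₘ gcd (m i) (m j))) := by
    rw [← mul_assoc, hu]
    conv_lhs => rw [← hdj]
    ring
  have := mul_left_cancel₀ hd.ne_zero key
  exact ⟨u, this⟩

/-- The lcm factorization: `M = m_i · lcm_{j ≠ i} Γ_{ji}`. -/
lemma lcm_factor (hmonic : ∀ i, (m i).Monic) (i : Fin L) :
    Finset.univ.lcm m =
      m i * (Finset.univ.erase i).lcm (fun j => m j /ₘ gcd (m i) (m j)) := by
  have hm0 : ∀ j, m j ≠ 0 := fun j => (hmonic j).ne_zero
  set Γ : Fin L → Polynomial F := fun j => m j /ₘ gcd (m i) (m j) with hΓ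
  have hΓmonic : ∀ j, (Γ j).Monic := fun j =>
    monic_divByMonic' (gcd_monic' (hm0 i)) (hmonic j) (gcd_dvd_right _ _)
  have hlcmΓ_ne : (Finset.univ.erase i).lcm Γ ≠ 0 := by
    intro h
    obtain ⟨j, _, hj⟩ := (Finset.lcm_eq_zero_iff.mp h)
    exact (hΓmonic j).ne_zero hj
  have hlcmΓ_monic : ((Finset.univ.erase i).lcm Γ).Monic := by
    rw [← Finset.normalize_lcm]
    exact monic_normalize hlcmΓ_ne
  have hM_ne : Finset.univ.lcm m ≠ 0 := by
    intro h
    obtain ⟨j, _, hj⟩ := (Finset.lcm_eq_zero_iff.mp h)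
    exact hm0 j hj
  have hM_monic : (Finset.univ.lcm m).Monic := by
    rw [← Finset.normalize_lcm]
    exact monic_normalize hM_ne
  -- first divisibility : m i * lcm Γ ∣ M
  have hiM : m i ∣ Finset.univ.lcm m := Finset.dvd_lcm (Finset.mem_univ i)
  have hQ : m i * (Finset.univ.lcm m /ₘ m i) = Finset.univ.lcm m :=
    mul_divByMonic' (hmonic i) hiM
  have dvd1 : m i * (Finset.univ.erase i).lcm Γ ∣ Finset.univ.lcm m := by
    rw [← hQ]
    refine mul_dvd_mul_left (m i) (Finset.lcm_dvd ?_)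
    intro j _
    have h1 : m i * Γ j ∣ Finset.univ.lcm m := by
      rw [← lcm_pair_eq m hmonic i j]
      exact lcm_dvd (Finset.dvd_lcm (Finset.mem_univ i)) (Finset.dvd_lcm (Finset.mem_univ j))
    rw [← hQ] at h1
    exact (mul_dvd_mul_iff_left (hm0 i)).mp h1
  -- second divisibility : M ∣ m i * lcm Γ
  have dvd2 : Finset.univ.lcm m ∣ m i * (Finset.univ.erase i).lcm Γ := by
    refine Finset.lcm_dvd ?_
    intro j _
    by_cases hji : j = i
    · subst hji; exact dvd_mul_right _ _
    · have hdj : gcd (m i) (m j) * Γ j = m j :=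
        mul_divByMonic' (gcd_monic' (hm0 i)) (gcd_dvd_right _ _)
      calc m j = gcd (m i) (m j) * Γ j := hdj.symm
      _ ∣ m i * (Finset.univ.erase i).lcm Γ :=
          mul_dvd_mul (gcd_dvd_left _ _)
            (Finset.dvd_lcm (Finset.mem_erase.mpr ⟨hji, Finset.mem_univ j⟩))
  exact eq_of_monic_of_associated hM_monic ((hmonic i).mul hlcmΓ_monic)
    (associated_of_dvd_dvd dvd2 dvd1)

/-- The weight correspondence between `a = k·m_i` and `k`. -/
lemma filter_weight_eq (hmonic : ∀ i, (m i).Monic) (i : Fin L) (k : Polynomial F) :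
    (Finset.univ.filter fun j => ¬ m j ∣ k * m i) =
      ((Finset.univ.erase i).filter fun j => ¬ (m j /ₘ gcd (m i) (m j)) ∣ k) := by
  have hm0 : ∀ j, m j ≠ 0 := fun j => (hmonic j).ne_zero
  ext j
  simp only [Finset.mem_filter, Finset.mem_erase, Finset.mem_univ, true_and, and_true]
  rw [dvd_mul_iff_div_gcd_dvd (hm0 i)]
  constructor
  · intro h
    refine ⟨?_, h⟩
    rintro rfl
    apply h
    have : gcd (m j) (m j) = m j := by rw [gcd_same, (hmonic j).normalize_eq_self]
    rw [this]
    have h1 : m j * (m j /ₘ m j) = m j := mul_divByMonic' (hmonic j) dvd_rfl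
    have h2 : m j /ₘ m j = 1 := by
      have := mul_left_cancel₀ (hm0 j) (h1.trans (mul_one (m j)).symm)
      exact this
    rw [h2]
    exact one_dvd k
  · rintro ⟨_, h⟩; exact h

end Aux

/-- `min{w⁽¹⁾, …, w⁽ᴸ⁾} = d`, where `w⁽ⁱ⁾` is the code distance of the
polynomial remainder code with the `L−1` moduli `Γ_{ji} = m_j / gcd(m_i, m_j)`,
`j ≠ i`, and `d` is the code distance of the code with moduli `m_1, …, m_L`. -/
theorem stmt8 {F : Type*} [Field F] {L : ℕ} (hL : 2 ≤ L)
    (m : Fin L → Polynomial F)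
    (hmonic : ∀ i, (m i).Monic)
    (hdist : Function.Injective m)
    (hdeg : ∀ i, 0 < (m i).degree)
    (hm_lt : ∀ i, (m i).degree < (Finset.univ.lcm m).degree) :
    sInf (Set.range fun i : Fin L =>
        codeDist (Finset.univ.erase i) (fun j => m j /ₘ gcd (m i) (m j))) =
      codeDist Finset.univ m := by
  have hm0 : ∀ j, m j ≠ 0 := fun j => (hmonic j).ne_zero
  have hLpos : 0 < L := by omega
  have i0 : Fin L := ⟨0, hLpos⟩
  set M : Polynomial F := Finset.univ.lcm m with hM
  set Γ : Fin L → Fin L → Polynomial F := fun i j => m j /ₘ gcd (m i) (m j) with hΓdef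
  set lcmΓ : Fin L → Polynomial F := fun i => (Finset.univ.erase i).lcm (Γ i) with hlcmΓ
  have hfac : ∀ i, M = m i * lcmΓ i := fun i => lcm_factor m hmonic i
  have hdegM : ∀ i, M.degree = (m i).degree + (lcmΓ i).degree := by
    intro i
    rw [hfac i, degree_mul]
  have hmibot : ∀ i, (m i).degree ≠ ⊥ := fun i => degree_ne_bot.mpr (hm0 i)
  have hdegΓpos : ∀ i, 0 < (lcmΓ i).degree := by
    intro i
    by_contra h
    push_neg at h
    have h1 : (m i).degree + (lcmΓ i).degree ≤ (m i).degree + 0 :=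
      add_le_add le_rfl h
    rw [add_zero] at h1
    have := lt_of_lt_of_le (hm_lt i) ((hdegM i) ▸ h1)
    exact lt_irrefl _ this
  -- the defining sets
  set S : Set ℕ := {k | ∃ a : Polynomial F, a ≠ 0 ∧ a.degree < M.degree ∧
    (Finset.univ.filter fun j => ¬ m j ∣ a).card = k} with hS
  set Si : Fin L → Set ℕ := fun i => {k | ∃ a : Polynomial F, a ≠ 0 ∧
    a.degree < ((Finset.univ.erase i).lcm (Γ i)).degree ∧
    ((Finset.univ.erase i).filter fun j => ¬ Γ i j ∣ a).card = k} with hSi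
  have hcdS : codeDist Finset.univ m = sInf S := rfl
  have hcdSi : ∀ i, codeDist (Finset.univ.erase i) (Γ i) = sInf (Si i) := fun i => rfl
  have hS_ne : S.Nonempty := by
    refine ⟨_, m i0, hm0 i0, hm_lt i0, rfl⟩
  have hSi_ne : ∀ i, (Si i).Nonempty := by
    intro i
    refine ⟨_, 1, one_ne_zero, ?_, rfl⟩
    rw [degree_one]
    exact hdegΓpos i
  -- d ≤ w i for every i
  have hd_le : ∀ i, sInf S ≤ sInf (Si i) := by
    intro i
    obtain ⟨k, hk0, hkdeg, hkcard⟩ := Nat.sInf_mem (hSi_ne i)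
    refine Nat.sInf_le ?_
    refine ⟨k * m i, mul_ne_zero hk0 (hm0 i), ?_, ?_⟩
    · rw [degree_mul, hdegM i, add_comm]
      exact WithBot.add_lt_add_left (hmibot i) hkdeg
    · rw [filter_weight_eq m hmonic i k]
      exact hkcard
  -- existence of i with w i ≤ d
  obtain ⟨a, ha0, hadeg, hacard⟩ := Nat.sInf_mem hS_ne
  have hd_lt_L : sInf S < L := by
    have h1 : sInf S ≤ ((Finset.univ.filter fun j => ¬ m j ∣ m i0).card) :=
      Nat.sInf_le ⟨m i0, hm0 i0, hm_lt i0, rfl⟩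
    have h2 : (Finset.univ.filter fun j => ¬ m j ∣ m i0) ⊆ Finset.univ.erase i0 := by
      intro j hj
      rw [Finset.mem_filter] at hj
      refine Finset.mem_erase.mpr ⟨?_, Finset.mem_univ j⟩
      rintro rfl
      exact hj.2 dvd_rfl
    have h3 := Finset.card_le_card h2
    rw [Finset.card_erase_of_mem (Finset.mem_univ i0), Finset.card_univ, Fintype.card_fin] at h3
    omega
  have hex : ∃ i : Fin L, m i ∣ a := by
    by_contra h
    push_neg at h
    have : (Finset.univ.filter fun j => ¬ m j ∣ a) = Finset.univ := by
      refine Finset.filter_true_of_mem ?_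
      intro j _
      exact h j
    rw [this, Finset.card_univ, Fintype.card_fin] at hacard
    omega
  obtain ⟨i, hia⟩ := hex
  have hw_le : sInf (Si i) ≤ sInf S := by
    set k : Polynomial F := a /ₘ m i with hk
    have hak : m i * k = a := mul_divByMonic' (hmonic i) hia
    have hk0 : k ≠ 0 := by
      intro h
      rw [h, mul_zero] at hak
      exact ha0 hak.symm
    refine Nat.sInf_le ?_
    refine ⟨k, hk0, ?_, ?_⟩
    · have h1 : (m i).degree + k.degree < (m i).degree + (lcmΓ i).degree := by
        rw [← degree_mul, hak, ← hdegM i]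
        exact hadeg
      exact lt_of_add_lt_add_left h1
    · rw [← hacard]
      rw [show a = k * m i by rw [mul_comm]; exact hak.symm]
      exact congrArg Finset.card (filter_weight_eq m hmonic i k).symm
  refine le_antisymm ?_ ?_
  · calc sInf (Set.range fun i : Fin L => codeDist (Finset.univ.erase i) (Γ i))
        ≤ codeDist (Finset.univ.erase i) (Γ i) := Nat.sInf_le ⟨i, rfl⟩
    _ = sInf (Si i) := hcdSi i
    _ ≤ sInf S := hw_le
  · rw [hcdS]
    refine le_csInf ⟨_, ⟨i0, rfl⟩⟩ ?_
    rintro b ⟨j, rfl⟩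
    calc sInf S ≤ sInf (Si j) := hd_le j
    _ = codeDist (Finset.univ.erase j) (Γ j) := (hcdSi j).symm
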